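/- Let p be a prime and 1 ≤ b < a integers with ν_p(a-b)=0 and {ν_p(a),ν_p(b)}={0,k}, and let c, d be integers. Then the p-adic limit L(c,d) := lim_{e→∞} C(a·p^e + c, b·p^e + d) exists in Z_p and equals: L(0,0)·C(c,d) if c,d ≥ 0; L(0,0)·C(c,d)·(a-b)/a if c < 0 ≤ d; L(0,0)·C(c,c-d)·b/a if c < 0 ≤ c-d; and 0 otherwise. Here C(c,d) = c(c-1)···(c-d+1)/d! for d ≥ 0. -/

import Mathlib

open Finset Filter

section Stmt14Aux

lemma fact_add' (X n : ℕ) : (X + n).factorial = X.factorial * ∏ i ∈ range n, (X + i + 1) := by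
  induction n with
  | zero => simp
  | succ n ih =>
    rw [prod_range_succ, ← mul_assoc, ← ih, ← Nat.add_assoc, Nat.factorial_succ, mul_comm]

lemma intProd_eq' (n : ℕ) : (∏ i ∈ range n, ((i : ℤ) + 1)) = (n.factorial : ℤ) := by
  have h := Finset.prod_range_add_one_eq_factorial n
  calc (∏ i ∈ range n, ((i : ℤ) + 1)) = ((∏ i ∈ range n, (i + 1) : ℕ) : ℤ) := by push_cast; rfl
    _ = (n.factorial : ℤ) := by rw [h]

lemma prod_split' {M : Type*} [CommMonoid M] (f : ℕ → M) (p K : ℕ) (hp : 0 < p) :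
    ∏ j ∈ range (p * K), f (j + 1) =
      (∏ i ∈ range K, f (p * (i + 1))) *
        ∏ j ∈ (range (p * K)).filter (fun j => ¬ (p ∣ (j + 1))), f (j + 1) := by
  rw [← Finset.prod_filter_mul_prod_filter_not (range (p * K)) (fun j => p ∣ (j + 1))]
  congr 1
  refine (Finset.prod_bij (fun i _ => p * i + (p - 1)) ?_ ?_ ?_ ?_).symm
  · intro i hi
    simp only [mem_filter, mem_range] at hi ⊢
    have h1 : p * i + (p - 1) + 1 = p * (i + 1) := by rw [Nat.mul_succ]; omega
    have h2 : p * (i + 1) ≤ p * K := Nat.mul_le_mul_left p hi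
    exact ⟨by omega, by rw [h1]; exact Dvd.intro _ rfl⟩
  · intro i _ j _ h
    have h' : p * i = p * j := by omega
    exact Nat.eq_of_mul_eq_mul_left hp h'
  · intro j hj
    simp only [mem_filter, mem_range] at hj
    obtain ⟨hj1, m, hm⟩ := hj
    have hm1 : 1 ≤ m := by
      rcases Nat.eq_zero_or_pos m with h | h
      · subst h; simp at hm
      · exact h
    have hmK : m ≤ K := by
      by_contra h
      have h2 : p * (K + 1) ≤ p * m := Nat.mul_le_mul_left p (by omega)
      rw [Nat.mul_succ] at h2; omega
    refine ⟨m - 1, by simp only [mem_range]; omega, ?_⟩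
    have h3 : p * (m - 1) + p = p * m := by
      rw [← Nat.mul_succ]; congr 1; omega
    omega
  · intro i hi
    congr 1
    rw [Nat.mul_succ]; omega

lemma cancel_aux' (x y u v f q g : ℕ) (hf : 0 < f) (hq : 0 < q) (hg : 0 < g)
    (h : x * (q * g * u) * f = f * (q * (y * g) * v)) : x * u = y * v := by
  have h2 : (f * q * g) * (x * u) = (f * q * g) * (y * v) := by
    calc (f * q * g) * (x * u) = x * (q * g * u) * f := by ring
      _ = f * (q * (y * g) * v) := h
      _ = (f * q * g) * (y * v) := by ring
  exact Nat.eq_of_mul_eq_mul_left (by positivity) h2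

lemma stepA' (p a b : ℕ) (hp : 0 < p) (hba : b ≤ a) (e : ℕ) :
    (a * p ^ (e+1)).choose (b * p ^ (e+1)) *
        (∏ j ∈ (range (b * p ^ (e+1))).filter (fun j => ¬ (p ∣ (j + 1))), (j + 1)) =
      (a * p ^ e).choose (b * p ^ e) *
        ∏ j ∈ (range (b * p ^ (e+1))).filter (fun j => ¬ (p ∣ (j + 1))), ((a - b) * p ^ (e+1) + (j + 1)) := by
  set M0 := b * p ^ e with hM0
  set K0 := (a - b) * p ^ e with hK0
  set M' := b * p ^ (e+1) with hM'
  set K' := (a - b) * p ^ (e+1) with hK'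
  set U := ∏ j ∈ (range M').filter (fun j => ¬ (p ∣ (j + 1))), (j + 1) with hU
  set V := ∏ j ∈ (range M').filter (fun j => ¬ (p ∣ (j + 1))), (K' + (j + 1)) with hV
  have hMp : M' = p * M0 := by rw [hM', hM0, pow_succ]; ring
  have hKp : K' = p * K0 := by rw [hK', hK0, pow_succ]; ring
  have hKM' : K' + M' = a * p ^ (e+1) := by rw [hK', hM', ← Nat.add_mul, Nat.sub_add_cancel hba]
  have hKM0 : K0 + M0 = a * p ^ e := by rw [hK0, hM0, ← Nat.add_mul, Nat.sub_add_cancel hba]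
  have h1 : (a * p ^ (e+1)).choose M' * M'.factorial * K'.factorial = (a * p^(e+1)).factorial := by
    have hle : M' ≤ a * p ^ (e+1) := by omega
    have h : a * p ^ (e+1) - M' = K' := by omega
    rw [← h]
    exact Nat.choose_mul_factorial_mul_factorial hle
  have h2 : (a * p ^ (e+1)).factorial = K'.factorial * ∏ i ∈ range M', (K' + i + 1) := by
    rw [← hKM']; exact fact_add' K' M'
  have h10 : (a * p ^ e).choose M0 * M0.factorial * K0.factorial = (a * p^e).factorial := by
    have hle : M0 ≤ a * p ^ e := by omega
    have h : a * p ^ e - M0 = K0 := by omega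
    rw [← h]
    exact Nat.choose_mul_factorial_mul_factorial hle
  have h20 : (a * p ^ e).factorial = K0.factorial * ∏ i ∈ range M0, (K0 + i + 1) := by
    rw [← hKM0]; exact fact_add' K0 M0
  have h4 : ∏ i ∈ range M0, (K0 + i + 1) = (a * p ^ e).choose M0 * M0.factorial := by
    have h := h10.trans h20
    apply Nat.eq_of_mul_eq_mul_left (Nat.factorial_pos K0)
    rw [← h]; ring
  have h3 : ∏ i ∈ range M', (K' + i + 1) =
      p ^ M0 * (∏ i ∈ range M0, (K0 + i + 1)) * V := by
    have hsp := prod_split' (fun x => K' + x) p M0 hp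
    simp only [← hMp] at hsp
    have hmid : (∏ i ∈ range M0, (K' + p * (i + 1))) = p ^ M0 * ∏ i ∈ range M0, (K0 + i + 1) := by
      calc (∏ i ∈ range M0, (K' + p * (i + 1))) = ∏ i ∈ range M0, p * (K0 + i + 1) := by
            apply prod_congr rfl
            intro i _
            rw [hKp, Nat.mul_add, Nat.mul_add, Nat.mul_one]; ring
        _ = p ^ M0 * ∏ i ∈ range M0, (K0 + i + 1) := by
            rw [prod_mul_distrib, prod_const, card_range]
    calc ∏ i ∈ range M', (K' + i + 1) = ∏ j ∈ range M', (fun x => K' + x) (j + 1) := by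
          apply prod_congr rfl; intro i _; simp [Nat.add_assoc]
      _ = _ := by rw [hsp, hmid, hV]
  have h5 : M'.factorial = p ^ M0 * M0.factorial * U := by
    have hsp := prod_split' (fun x => x) p M0 hp
    simp only [← hMp] at hsp
    have hid : (∏ i ∈ range M0, p * (i + 1)) = p ^ M0 * M0.factorial := by
      rw [prod_mul_distrib, prod_const, card_range, Finset.prod_range_add_one_eq_factorial]
    rw [← Finset.prod_range_add_one_eq_factorial, hsp, hid, hU]
  have hkey : (a * p ^ (e+1)).choose M' * (p ^ M0 * M0.factorial * U) * K'.factorial =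
      K'.factorial * (p ^ M0 * ((a * p ^ e).choose M0 * M0.factorial) * V) := by
    rw [← h5, h1, h2, h3, h4]
  exact cancel_aux' _ _ _ _ _ _ _ (Nat.factorial_pos _) (Nat.pow_pos hp)
    (Nat.factorial_pos _) hkey

lemma stepA2' (p a b : ℕ) (hp : p.Prime) (hba : b ≤ a) (e : ℕ) :
    (p:ℤ) ^ (e+1) ∣ ((a * p ^ (e+1)).choose (b * p ^ (e+1)) : ℤ) -
      ((a * p ^ e).choose (b * p ^ e) : ℤ) := by
  set n := p ^ (e+1) with hn
  have hcop : Nat.Coprime (∏ j ∈ (range (b * p ^ (e+1))).filter (fun j => ¬ (p ∣ (j + 1))), (j + 1)) n := by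
    refine Nat.Coprime.symm (Nat.Coprime.pow_left _ (Nat.Coprime.prod_right ?_))
    intro j hj
    rw [mem_filter] at hj
    exact (Nat.Prime.coprime_iff_not_dvd hp).mpr hj.2
  have hunit : IsUnit ((∏ j ∈ (range (b * p ^ (e+1))).filter (fun j => ¬ (p ∣ (j + 1))), (j + 1) : ℕ)
      : ZMod n) := (ZMod.isUnit_iff_coprime _ n).mpr hcop
  have hA := stepA' p a b hp.pos hba e
  have hzero : ((p:ZMod n) ^ (e+1)) = 0 := by
    have h := ZMod.natCast_self n
    rw [hn] at h ⊢
    push_cast at h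
    exact h
  have h1 := congrArg (fun t : ℕ => (t : ZMod n)) hA
  push_cast at h1
  have hVU : (∏ x ∈ (range (b * p ^ (e+1))).filter (fun j => ¬ (p ∣ (j + 1))),
        ((a - b : ℕ) * (p:ZMod n) ^ (e+1) + ((x:ZMod n) + 1))) =
      ∏ x ∈ (range (b * p ^ (e+1))).filter (fun j => ¬ (p ∣ (j + 1))), ((x:ZMod n) + 1) := by
    apply prod_congr rfl
    intro j _
    rw [hzero]
    ring
  rw [hVU] at h1
  have hcast : (((a * p ^ (e+1)).choose (b * p ^ (e+1)) : ZMod n)) *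
        ((∏ j ∈ (range (b * p ^ (e+1))).filter (fun j => ¬ (p ∣ (j + 1))), (j + 1) : ℕ) : ZMod n) =
      ((a * p ^ e).choose (b * p ^ e) : ZMod n) *
        ((∏ j ∈ (range (b * p ^ (e+1))).filter (fun j => ¬ (p ∣ (j + 1))), (j + 1) : ℕ) : ZMod n) := by
    push_cast
    exact h1
  have heq := hunit.mul_right_cancel hcast
  have hmod : (a * p ^ (e+1)).choose (b * p ^ (e+1)) ≡ (a * p ^ e).choose (b * p ^ e) [MOD n] :=
    (ZMod.natCast_eq_natCast_iff _ _ _).mp heq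
  have hd := (Nat.ModEq.dvd hmod)
  rw [hn] at hd
  push_cast at hd
  exact (dvd_sub_comm).mp hd

lemma exists_L0' (p : ℕ) [hp : Fact p.Prime] (a b : ℕ) (hba : b ≤ a) :
    ∃ L0 : ℤ_[p], Tendsto (fun e : ℕ => (((a * p ^ e).choose (b * p ^ e) : ℕ) : ℤ_[p]))
      atTop (nhds L0) := by
  set f : ℕ → ℤ_[p] := fun e => (((a * p ^ e).choose (b * p ^ e) : ℕ) : ℤ_[p]) with hf
  have hcauchy : CauchySeq f := by
    apply cauchySeq_of_le_geometric ((p:ℝ)⁻¹) 1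
    · rw [inv_lt_one_iff₀]
      right
      exact_mod_cast hp.out.one_lt
    · intro e
      have hdvd := stepA2' p a b hp.out hba e
      have hnorm : ‖((((a * p ^ (e+1)).choose (b * p ^ (e+1)) : ℤ) -
          ((a * p ^ e).choose (b * p ^ e) : ℤ) : ℤ) : ℤ_[p])‖ ≤ (p:ℝ) ^ (-(e+1:ℕ) : ℤ) := by
        rw [PadicInt.norm_int_le_pow_iff_dvd]
        exact_mod_cast hdvd
      rw [dist_eq_norm]
      have heq : f e - f (e+1) = -((((a * p ^ (e+1)).choose (b * p ^ (e+1)) : ℤ) -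
          ((a * p ^ e).choose (b * p ^ e) : ℤ) : ℤ) : ℤ_[p]) := by
        rw [hf]
        push_cast
        ring
      rw [heq, norm_neg]
      refine hnorm.trans ?_
      have h1 : (p:ℝ) ^ (-(e+1:ℕ) : ℤ) = ((p:ℝ)⁻¹) ^ (e+1) := by
        rw [zpow_neg, zpow_natCast, inv_pow]
      rw [h1, one_mul, pow_succ]
      have hp0 : (0:ℝ) < (p:ℝ) := by exact_mod_cast hp.out.pos
      have hp1 : (0:ℝ) < (p:ℝ)⁻¹ := by positivity
      have hp2 : (p:ℝ)⁻¹ ≤ 1 := by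
        rw [inv_le_one_iff₀]
        right
        exact_mod_cast hp.out.one_le
      nlinarith [pow_pos hp1 e, pow_nonneg (le_of_lt hp1) e]
  exact cauchySeq_tendsto_of_complete hcauchy

lemma descPoch_prod' (c : ℤ) (n : ℕ) :
    (descPochhammer ℤ n).eval c = ∏ j ∈ range n, (c - j) := by
  induction n with
  | zero => simp [descPochhammer_zero]
  | succ n ih =>
    rw [descPochhammer_succ_right, prod_range_succ, Polynomial.eval_mul, ih,
      Polynomial.eval_sub, Polynomial.eval_X, Polynomial.eval_natCast]

lemma factorial_dvd_prod' (c : ℤ) (n : ℕ) :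
    (n.factorial : ℤ) ∣ ∏ j ∈ range n, (c - j) := by
  have h := Ring.descPochhammer_eq_factorial_smul_choose (R := ℤ) c n
  rw [← Polynomial.eval_eq_smeval, descPoch_prod', nsmul_eq_mul] at h
  exact ⟨Ring.choose c n, h⟩

lemma IZ' (c v : ℤ) (hc : c < 0) (hv : 0 ≤ v) :
    ∏ i ∈ range (v - c - 1).toNat, (c - v + 1 + i) =
      (∏ j ∈ range v.toNat, (c - j)) * ∏ i ∈ range (-c - 1).toNat, (c + 1 + i) := by
  have hsplit : (v - c - 1).toNat = v.toNat + (-c - 1).toNat := by omega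
  rw [hsplit, prod_range_add]
  congr 1
  · rw [← prod_range_reflect]
    apply prod_congr rfl
    intro j hj
    rw [mem_range] at hj
    have h : ((v.toNat - 1 - j : ℕ) : ℤ) = v - 1 - j := by omega
    rw [h]; ring
  · apply prod_congr rfl
    intro i _
    have h : ((v.toNat + i : ℕ) : ℤ) = v + i := by omega
    rw [h]; ring

lemma IZ1' (c d : ℤ) (hc : 0 ≤ c) (hd : 0 ≤ d) (hcd : 0 ≤ c - d) :
    ∏ i ∈ range c.toNat, ((i : ℤ) + 1) =
      (∏ i ∈ range (c - d).toNat, ((i : ℤ) + 1)) * ∏ j ∈ range d.toNat, (c - j) := by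
  have hsplit : c.toNat = (c - d).toNat + d.toNat := by omega
  rw [hsplit, prod_range_add]
  congr 1
  rw [← prod_range_reflect]
  apply prod_congr rfl
  intro j hj
  rw [mem_range] at hj
  have h1 : (((c - d).toNat + (d.toNat - 1 - j) : ℕ) : ℤ) = c - 1 - j := by omega
  rw [h1]; ring

variable (p : ℕ) [hp : Fact p.Prime]

noncomputable def PFq (α : ℕ) (t0 : ℤ) (n e : ℕ) : ℚ_[p] :=
  ∏ i ∈ range n, ((α : ℚ_[p]) * (p : ℚ_[p]) ^ e + ((t0 + i + 1 : ℤ) : ℚ_[p]))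

lemma PFq_fact (α : ℕ) (t0 : ℤ) (X n e : ℕ) (hX : (X : ℤ) = α * (p : ℤ) ^ e + t0) :
    (((X + n).factorial : ℕ) : ℚ_[p]) = (X.factorial : ℚ_[p]) * PFq p α t0 n e := by
  rw [fact_add', PFq]
  push_cast
  congr 1
  apply prod_congr rfl
  intro i _
  have hX' : ((X : ℤ) : ℚ_[p]) = (((α : ℤ) * (p : ℤ) ^ e + t0 : ℤ) : ℚ_[p]) := by rw [hX]
  push_cast at hX'
  rw [hX']
  ring

lemma PFq_tendsto (α : ℕ) (t0 : ℤ) (n : ℕ) :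
    Tendsto (fun e => PFq p α t0 n e) atTop
      (nhds (((∏ i ∈ range n, (t0 + (i : ℤ) + 1) : ℤ)) : ℚ_[p])) := by
  have hq : ‖(p : ℚ_[p])‖ < 1 := by
    rw [Padic.norm_p]
    rw [inv_lt_one_iff₀]
    right
    exact_mod_cast hp.out.one_lt
  have hu : Tendsto (fun e : ℕ => (p : ℚ_[p]) ^ e) atTop (nhds 0) :=
    tendsto_pow_atTop_nhds_zero_of_norm_lt_one hq
  have h : Tendsto (fun e => PFq p α t0 n e) atTop
      (nhds (∏ i ∈ range n, ((α : ℚ_[p]) * 0 + ((t0 + i + 1 : ℤ) : ℚ_[p])))) := by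
    apply tendsto_finset_prod
    intro i _
    exact ((hu.const_mul (α : ℚ_[p]))).add_const _
  convert h using 2
  push_cast
  rw [prod_congr rfl]
  intro i _
  ring

lemma PFq_ne (α : ℕ) (t0 : ℤ) (n e : ℕ)
    (h : ∀ i : ℕ, i ∈ range n → (α : ℤ) * (p : ℤ) ^ e + t0 + i + 1 ≠ 0) :
    PFq p α t0 n e ≠ 0 := by
  rw [PFq]
  apply prod_ne_zero_iff.mpr
  intro i hi
  have h2 : ((α : ℚ_[p]) * (p : ℚ_[p]) ^ e + ((t0 + i + 1 : ℤ) : ℚ_[p])) =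
      (((α : ℤ) * (p : ℤ) ^ e + t0 + i + 1 : ℤ) : ℚ_[p]) := by push_cast; ring
  rw [h2]
  exact_mod_cast h i hi

lemma PFq_peel (α : ℕ) (t0 : ℤ) (m e : ℕ) (h : t0 + m + 1 = 0) :
    PFq p α t0 (m + 1) e = PFq p α t0 m e * ((α : ℚ_[p]) * (p : ℚ_[p]) ^ e) := by
  rw [PFq, PFq, prod_range_succ]
  congr 1
  rw [h]
  simp

lemma LPne (t0 : ℤ) (n : ℕ) (h : ∀ i : ℕ, i < n → t0 + i + 1 ≠ 0) :
    (((∏ i ∈ range n, (t0 + (i : ℤ) + 1) : ℤ)) : ℚ_[p]) ≠ 0 := by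
  rw [Int.cast_ne_zero]
  exact prod_ne_zero_iff.mpr (fun i hi => h i (mem_range.mp hi))

lemma tendsto_coe_iff (f : ℕ → ℕ) (L : ℤ_[p]) :
    Tendsto (fun e => ((f e : ℚ_[p]))) atTop (nhds (L : ℚ_[p])) ↔
      Tendsto (fun e => ((f e) : ℤ_[p])) atTop (nhds L) := by
  have h : (fun e => dist ((f e : ℤ_[p])) L) = (fun e => dist ((f e : ℚ_[p])) (L : ℚ_[p])) := by
    funext e
    change dist ((f e : ℤ_[p]) : ℚ_[p]) (L : ℚ_[p]) = _
    congr 1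
  constructor <;> intro h'
  · rw [tendsto_iff_dist_tendsto_zero, h]
    exact tendsto_iff_dist_tendsto_zero.mp h'
  · rw [tendsto_iff_dist_tendsto_zero]
    have h2 := tendsto_iff_dist_tendsto_zero.mp h'
    rw [h] at h2
    exact h2

lemma exists_coe_lim (f : ℕ → ℕ) (L' : ℚ_[p])
    (h : Tendsto (fun e => ((f e : ℚ_[p]))) atTop (nhds L')) :
    ∃ L : ℤ_[p], (L : ℚ_[p]) = L' ∧ Tendsto (fun e => ((f e) : ℤ_[p])) atTop (nhds L) := by
  have hn : ‖L'‖ ≤ 1 := by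
    apply le_of_tendsto h.norm
    filter_upwards with e
    have h2 := Padic.norm_int_le_one (p := p) (f e : ℤ)
    push_cast at h2
    exact h2
  refine ⟨⟨L', hn⟩, rfl, (tendsto_coe_iff p f ⟨L', hn⟩).mp ?_⟩
  exact h

variable {p}

lemma tendsto_of_eventually_mul {f g h : ℕ → ℚ_[p]} {G H : ℚ_[p]}
    (hev : ∀ᶠ e in atTop, f e * h e = g e) (hg : Tendsto g atTop (nhds G))
    (hh : Tendsto h atTop (nhds H)) (hH : H ≠ 0) (hne : ∀ᶠ e in atTop, h e ≠ 0) :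
    Tendsto f atTop (nhds (G / H)) := by
  have hdiv := hg.div hh hH
  apply hdiv.congr'
  filter_upwards [hev, hne] with e h1 h2
  show g e / h e = f e
  rw [div_eq_iff h2]
  exact h1.symm

end Stmt14Aux

/-- Generalized binomial coefficient `C(c,d) = c(c-1)⋯(c-d+1)/d!` for `c : ℤ`, `d : ℕ`
(the integer division is exact). -/
def genChoose (c : ℤ) (d : ℕ) : ℤ :=
  (∏ j ∈ Finset.range d, (c - j)) / (d.factorial : ℤ)

lemma genChoose_mul_factorial (c : ℤ) (n : ℕ) :
    genChoose c n * n.factorial = ∏ j ∈ range n, (c - j) :=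
  Int.ediv_mul_cancel (factorial_dvd_prod' c n)

theorem stmt14 (p : ℕ) [Fact p.Prime] (a b k : ℕ) (hb : 1 ≤ b) (hba : b < a)
    (hab : padicValNat p (a - b) = 0)
    (hk : ({padicValNat p a, padicValNat p b} : Set ℕ) = {0, k})
    (c d : ℤ) :
    ∃ L0 L : ℤ_[p],
      Filter.Tendsto (fun e : ℕ => (((a * p ^ e).choose (b * p ^ e) : ℕ) : ℤ_[p]))
        Filter.atTop (nhds L0) ∧
      Filter.Tendsto
        (fun e : ℕ =>
          (((((a : ℤ) * (p : ℤ) ^ e + c).toNat).choose (((b : ℤ) * (p : ℤ) ^ e + d).toNat) : ℕ)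
            : ℤ_[p]))
        Filter.atTop (nhds L) ∧
      ((0 ≤ c → 0 ≤ d → L = L0 * (genChoose c d.toNat : ℤ_[p])) ∧
       (c < 0 → 0 ≤ d →
         (a : ℤ_[p]) * L = L0 * (genChoose c d.toNat : ℤ_[p]) * ((a : ℤ_[p]) - (b : ℤ_[p]))) ∧
       (c < 0 → 0 ≤ c - d →
         (a : ℤ_[p]) * L = L0 * (genChoose c (c - d).toNat : ℤ_[p]) * (b : ℤ_[p])) ∧
       (¬ (0 ≤ c ∧ 0 ≤ d) → ¬ (c < 0 ∧ 0 ≤ d) → ¬ (c < 0 ∧ 0 ≤ c - d) → L = 0)) := by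
  classical
  have hpp : p.Prime := (‹Fact p.Prime›).out
  have hblea : b ≤ a := le_of_lt hba
  obtain ⟨L0, hL0⟩ := exists_L0' p a b hblea
  have hL0Q : Tendsto (fun e : ℕ => (((a * p ^ e).choose (b * p ^ e) : ℕ) : ℚ_[p])) atTop
      (nhds ((L0 : ℚ_[p]))) := (tendsto_coe_iff p _ L0).mpr hL0
  refine ⟨L0, ?_⟩
  have hbase : ∀ e : ℕ, c.natAbs + d.natAbs + 2 ≤ e →
      ((c.natAbs : ℤ) + (d.natAbs : ℤ) + 2 ≤ (p:ℤ)^e ∧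
       (p:ℤ)^e ≤ (b:ℤ) * (p:ℤ)^e ∧
       (b:ℤ) * (p:ℤ)^e + (p:ℤ)^e ≤ (a:ℤ) * (p:ℤ)^e ∧
       ((a - b : ℕ) : ℤ) * (p:ℤ)^e = (a:ℤ) * (p:ℤ)^e - (b:ℤ) * (p:ℤ)^e ∧
       ((a * p ^ e : ℕ) : ℤ) = (a:ℤ) * (p:ℤ)^e ∧
       ((b * p ^ e : ℕ) : ℤ) = (b:ℤ) * (p:ℤ)^e ∧
       (((a - b) * p ^ e : ℕ) : ℤ) = ((a - b : ℕ) : ℤ) * (p:ℤ)^e) := by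
    intro e he
    have hpe : e < p ^ e := Nat.lt_pow_self (n := e) hpp.one_lt
    have hp0 : (0:ℤ) < (p:ℤ) := by exact_mod_cast hpp.pos
    refine ⟨?_, ?_, ?_, ?_, by push_cast; ring, by push_cast; ring, by push_cast; ring⟩
    · have h1 : (c.natAbs + d.natAbs + 2 : ℕ) ≤ p ^ e := by omega
      exact_mod_cast h1
    · have h1 : (1:ℤ) ≤ (b:ℤ) := by exact_mod_cast hb
      nlinarith [pow_pos hp0 e]
    · have h1 : (b:ℤ) + 1 ≤ (a:ℤ) := by exact_mod_cast hba
      nlinarith [pow_pos hp0 e]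
    · rw [Nat.cast_sub hblea]; ring
  by_cases hc : 0 ≤ c
  · by_cases hd : 0 ≤ d
    · by_cases hcd : 0 ≤ c - d
      · -- case TTT
        have hkey : ∀ e : ℕ, c.natAbs + d.natAbs + 2 ≤ e →
            (((((a:ℤ) * (p:ℤ)^e + c).toNat).choose (((b:ℤ) * (p:ℤ)^e + d).toNat) : ℕ) : ℚ_[p]) *
              (PFq p b 0 d.toNat e * PFq p (a - b) 0 (c - d).toNat e) =
            (((a * p ^ e).choose (b * p ^ e) : ℕ) : ℚ_[p]) * PFq p a 0 c.toNat e := by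
          intro e he
          obtain ⟨h1, h2, h3, h4, h5, h6, h7⟩ := hbase e he
          have hNN : ((a:ℤ) * (p:ℤ)^e + c).toNat = a * p ^ e + c.toNat := by omega
          have hMM : ((b:ℤ) * (p:ℤ)^e + d).toNat = b * p ^ e + d.toNat := by omega
          have hMN : b * p ^ e + d.toNat ≤ a * p ^ e + c.toNat := by omega
          have hsub : (a * p ^ e + c.toNat) - (b * p ^ e + d.toNat) = (a - b) * p ^ e + (c - d).toNat := by
            omega
          have hD := Nat.choose_mul_factorial_mul_factorial hMN
          rw [hsub] at hD
          have hC := Nat.choose_mul_factorial_mul_factorial (Nat.mul_le_mul_right (p^e) hblea)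
          rw [show a * p^e - b * p^e = (a - b) * p^e by omega] at hC
          have hD' := congrArg (fun t : ℕ => (t : ℚ_[p])) hD
          have hC' := congrArg (fun t : ℕ => (t : ℚ_[p])) hC
          simp only [Nat.cast_mul] at hD' hC'
          rw [PFq_fact p b 0 (b * p^e) d.toNat e (by push_cast; ring),
              PFq_fact p (a - b) 0 ((a - b) * p^e) (c - d).toNat e (by rw [h7]; ring),
              PFq_fact p a 0 (a * p^e) c.toNat e (by push_cast; ring)] at hD'
          rw [hNN, hMM]
          have hfne : (((b * p^e).factorial : ℚ_[p]) * (((a - b) * p^e).factorial : ℚ_[p])) ≠ 0 :=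
            mul_ne_zero (Nat.cast_ne_zero.mpr (Nat.factorial_ne_zero _))
              (Nat.cast_ne_zero.mpr (Nat.factorial_ne_zero _))
          apply mul_right_cancel₀ hfne
          linear_combination hD' - (PFq p a 0 c.toNat e) * hC'
        have hHne : (((∏ i ∈ range d.toNat, ((0:ℤ) + (i : ℤ) + 1) : ℤ)) : ℚ_[p]) *
            (((∏ i ∈ range (c - d).toNat, ((0:ℤ) + (i : ℤ) + 1) : ℤ)) : ℚ_[p]) ≠ 0 :=
          mul_ne_zero (LPne p 0 _ (fun i _ => by omega)) (LPne p 0 _ (fun i _ => by omega))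
        have hDlim : Tendsto (fun e : ℕ =>
            (((((a:ℤ) * (p:ℤ)^e + c).toNat).choose (((b:ℤ) * (p:ℤ)^e + d).toNat) : ℕ) : ℚ_[p]))
            atTop (nhds (((L0 : ℚ_[p]) * ((∏ i ∈ range c.toNat, ((0:ℤ) + (i : ℤ) + 1) : ℤ) : ℚ_[p])) /
              ((((∏ i ∈ range d.toNat, ((0:ℤ) + (i : ℤ) + 1) : ℤ)) : ℚ_[p]) *
               (((∏ i ∈ range (c - d).toNat, ((0:ℤ) + (i : ℤ) + 1) : ℤ)) : ℚ_[p])))) := by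
          apply tendsto_of_eventually_mul
            (h := fun e => PFq p b 0 d.toNat e * PFq p (a - b) 0 (c - d).toNat e)
          · filter_upwards [eventually_ge_atTop (c.natAbs + d.natAbs + 2)] with e he
            exact hkey e he
          · exact hL0Q.mul (PFq_tendsto p a 0 c.toNat)
          · exact (PFq_tendsto p b 0 d.toNat).mul (PFq_tendsto p (a - b) 0 (c - d).toNat)
          · exact hHne
          · filter_upwards [eventually_ge_atTop (c.natAbs + d.natAbs + 2)] with e he
            obtain ⟨h1, h2, h3, h4, h5, h6, h7⟩ := hbase e he
            exact mul_ne_zero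
              (PFq_ne p b 0 d.toNat e (fun i _ => by omega))
              (PFq_ne p (a - b) 0 (c - d).toNat e (fun i _ => by omega))
        obtain ⟨L, hLcoe, hLtend⟩ := exists_coe_lim p
          (fun e => ((((a:ℤ) * (p:ℤ)^e + c).toNat).choose (((b:ℤ) * (p:ℤ)^e + d).toNat))) _ hDlim
        refine ⟨L, hL0, hLtend, ?_, ?_, ?_, ?_⟩
        · intro _ _
          apply Subtype.coe_injective
          push_cast
          rw [hLcoe, div_eq_iff hHne]
          have hint : (∏ i ∈ range c.toNat, ((0:ℤ) + (i : ℤ) + 1)) =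
              genChoose c d.toNat * ((∏ i ∈ range d.toNat, ((0:ℤ) + (i : ℤ) + 1)) *
                (∏ i ∈ range (c - d).toNat, ((0:ℤ) + (i : ℤ) + 1))) := by
            have e1 : ∀ m : ℕ, (∏ i ∈ range m, ((0:ℤ) + (i : ℤ) + 1)) = ∏ i ∈ range m, ((i : ℤ) + 1) := by
              intro m; apply prod_congr rfl; intro i _; ring
            rw [e1, e1, e1, IZ1' c d hc hd hcd, intProd_eq' d.toNat]
            have hg := genChoose_mul_factorial c d.toNat
            linear_combination (∏ i ∈ range (c - d).toNat, ((i:ℤ) + 1)) * hg.symm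
          have hint' : ((∏ i ∈ range c.toNat, ((0:ℤ) + (i:ℤ) + 1) : ℤ) : ℚ_[p]) =
              ((genChoose c d.toNat : ℤ) : ℚ_[p]) *
                ((((∏ i ∈ range d.toNat, ((0:ℤ) + (i:ℤ) + 1) : ℤ)) : ℚ_[p]) *
                 (((∏ i ∈ range (c - d).toNat, ((0:ℤ) + (i:ℤ) + 1) : ℤ)) : ℚ_[p])) := by
            exact_mod_cast hint
          linear_combination (L0 : ℚ_[p]) * hint'
        · intro hc0 _
          exact absurd hc0 (not_lt.mpr hc)
        · intro hc0 _
          exact absurd hc0 (not_lt.mpr hc)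
        · intro h4' _ _
          exact absurd ⟨hc, hd⟩ h4'
      · -- case TTF : 0 ≤ c, 0 ≤ d, c - d < 0
        have hkey : ∀ e : ℕ, c.natAbs + d.natAbs + 2 ≤ e →
            (((((a:ℤ) * (p:ℤ)^e + c).toNat).choose (((b:ℤ) * (p:ℤ)^e + d).toNat) : ℕ) : ℚ_[p]) *
              PFq p b 0 d.toNat e =
            (((a * p ^ e).choose (b * p ^ e) : ℕ) : ℚ_[p]) *
              (PFq p a 0 c.toNat e * PFq p (a - b) (c - d) (d - c).toNat e) := by
          intro e he
          obtain ⟨h1, h2, h3, h4, h5, h6, h7⟩ := hbase e he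
          have hNN : ((a:ℤ) * (p:ℤ)^e + c).toNat = a * p ^ e + c.toNat := by omega
          have hMM : ((b:ℤ) * (p:ℤ)^e + d).toNat = b * p ^ e + d.toNat := by omega
          have hMN : b * p ^ e + d.toNat ≤ a * p ^ e + c.toNat := by omega
          have hD := Nat.choose_mul_factorial_mul_factorial hMN
          have hC := Nat.choose_mul_factorial_mul_factorial (Nat.mul_le_mul_right (p^e) hblea)
          rw [show a * p^e - b * p^e = (a - b) * p^e by omega,
              show (a - b) * p^e = ((a * p ^ e + c.toNat) - (b * p ^ e + d.toNat)) + (d - c).toNat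
                by omega] at hC
          have hD' := congrArg (fun t : ℕ => (t : ℚ_[p])) hD
          have hC' := congrArg (fun t : ℕ => (t : ℚ_[p])) hC
          simp only [Nat.cast_mul] at hD' hC'
          rw [PFq_fact p b 0 (b * p^e) d.toNat e (by push_cast; ring),
              PFq_fact p a 0 (a * p^e) c.toNat e (by push_cast; ring)] at hD'
          rw [PFq_fact p (a - b) (c - d) ((a * p ^ e + c.toNat) - (b * p ^ e + d.toNat))
              (d - c).toNat e (by omega)] at hC'
          rw [hNN, hMM]
          have hfne : (((b * p^e).factorial : ℚ_[p]) *
              (((a * p ^ e + c.toNat) - (b * p ^ e + d.toNat)).factorial : ℚ_[p])) ≠ 0 :=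
            mul_ne_zero (Nat.cast_ne_zero.mpr (Nat.factorial_ne_zero _))
              (Nat.cast_ne_zero.mpr (Nat.factorial_ne_zero _))
          apply mul_right_cancel₀ hfne
          linear_combination hD' - (PFq p a 0 c.toNat e) * hC'
        have hHne : (((∏ i ∈ range d.toNat, ((0:ℤ) + (i : ℤ) + 1) : ℤ)) : ℚ_[p]) ≠ 0 :=
          LPne p 0 _ (fun i _ => by omega)
        have hDlim : Tendsto (fun e : ℕ =>
            (((((a:ℤ) * (p:ℤ)^e + c).toNat).choose (((b:ℤ) * (p:ℤ)^e + d).toNat) : ℕ) : ℚ_[p]))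
            atTop (nhds (((L0 : ℚ_[p]) * (((∏ i ∈ range c.toNat, ((0:ℤ) + (i : ℤ) + 1) : ℤ) : ℚ_[p]) *
              ((∏ i ∈ range (d - c).toNat, ((c - d) + (i : ℤ) + 1) : ℤ) : ℚ_[p]))) /
              (((∏ i ∈ range d.toNat, ((0:ℤ) + (i : ℤ) + 1) : ℤ)) : ℚ_[p]))) := by
          apply tendsto_of_eventually_mul (h := fun e => PFq p b 0 d.toNat e)
          · filter_upwards [eventually_ge_atTop (c.natAbs + d.natAbs + 2)] with e he
            exact hkey e he
          · exact hL0Q.mul ((PFq_tendsto p a 0 c.toNat).mul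
              (PFq_tendsto p (a - b) (c - d) (d - c).toNat))
          · exact PFq_tendsto p b 0 d.toNat
          · exact hHne
          · filter_upwards [eventually_ge_atTop (c.natAbs + d.natAbs + 2)] with e he
            obtain ⟨h1, h2, h3, h4, h5, h6, h7⟩ := hbase e he
            exact PFq_ne p b 0 d.toNat e (fun i _ => by omega)
        obtain ⟨L, hLcoe, hLtend⟩ := exists_coe_lim p
          (fun e => ((((a:ℤ) * (p:ℤ)^e + c).toNat).choose (((b:ℤ) * (p:ℤ)^e + d).toNat))) _ hDlim
        refine ⟨L, hL0, hLtend, ?_, ?_, ?_, ?_⟩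
        · intro _ _
          have hz : (∏ i ∈ range (d - c).toNat, ((c - d) + (i : ℤ) + 1)) = 0 := by
            apply prod_eq_zero (mem_range.mpr (show (d - c).toNat - 1 < (d - c).toNat by omega))
            omega
          have hG0 : genChoose c d.toNat = 0 := by
            have hz2 : (∏ j ∈ range d.toNat, (c - (j:ℤ))) = 0 := by
              apply prod_eq_zero (mem_range.mpr (show c.toNat < d.toNat by omega))
              omega
            unfold genChoose
            rw [hz2]
            simp
          apply Subtype.coe_injective
          push_cast
          rw [hLcoe, hG0, hz]
          push_cast
          ring
        · intro hc0 _
          exact absurd hc0 (not_lt.mpr hc)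
        · intro hc0 _
          exact absurd hc0 (not_lt.mpr hc)
        · intro h4' _ _
          exact absurd ⟨hc, hd⟩ h4'
    · -- case TFT : 0 ≤ c, d < 0 (then c - d > 0)
      have hkey : ∀ e : ℕ, c.natAbs + d.natAbs + 2 ≤ e →
          (((((a:ℤ) * (p:ℤ)^e + c).toNat).choose (((b:ℤ) * (p:ℤ)^e + d).toNat) : ℕ) : ℚ_[p]) *
            PFq p (a - b) 0 (c - d).toNat e =
          (((a * p ^ e).choose (b * p ^ e) : ℕ) : ℚ_[p]) *
            (PFq p a 0 c.toNat e * PFq p b d (-d).toNat e) := by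
        intro e he
        obtain ⟨h1, h2, h3, h4, h5, h6, h7⟩ := hbase e he
        have hNN : ((a:ℤ) * (p:ℤ)^e + c).toNat = a * p ^ e + c.toNat := by omega
        have hMN : ((b:ℤ) * (p:ℤ)^e + d).toNat ≤ a * p ^ e + c.toNat := by omega
        have hD := Nat.choose_mul_factorial_mul_factorial hMN
        rw [show a * p ^ e + c.toNat - ((b:ℤ) * (p:ℤ)^e + d).toNat =
            (a - b) * p ^ e + (c - d).toNat by omega] at hD
        have hC := Nat.choose_mul_factorial_mul_factorial (Nat.mul_le_mul_right (p^e) hblea)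
        rw [show a * p^e - b * p^e = (a - b) * p^e by omega] at hC
        have hD' := congrArg (fun t : ℕ => (t : ℚ_[p])) hD
        have hC' := congrArg (fun t : ℕ => (t : ℚ_[p])) hC
        simp only [Nat.cast_mul] at hD' hC'
        rw [PFq_fact p (a - b) 0 ((a - b) * p^e) (c - d).toNat e (by rw [h7]; ring),
            PFq_fact p a 0 (a * p^e) c.toNat e (by push_cast; ring)] at hD'
        have hM0f : (((b * p^e).factorial : ℕ) : ℚ_[p]) =
            ((((b:ℤ) * (p:ℤ)^e + d).toNat.factorial : ℕ) : ℚ_[p]) * PFq p b d (-d).toNat e := by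
          rw [show b * p^e = ((b:ℤ) * (p:ℤ)^e + d).toNat + (-d).toNat by omega]
          exact PFq_fact p b d _ (-d).toNat e (by omega)
        rw [hM0f] at hC'
        rw [hNN]
        have hfne : (((((b:ℤ) * (p:ℤ)^e + d).toNat.factorial : ℕ) : ℚ_[p]) *
            ((((a - b) * p^e).factorial : ℕ) : ℚ_[p])) ≠ 0 :=
          mul_ne_zero (Nat.cast_ne_zero.mpr (Nat.factorial_ne_zero _))
            (Nat.cast_ne_zero.mpr (Nat.factorial_ne_zero _))
        apply mul_right_cancel₀ hfne
        linear_combination hD' - (PFq p a 0 c.toNat e) * hC'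
      have hHne : (((∏ i ∈ range (c - d).toNat, ((0:ℤ) + (i : ℤ) + 1) : ℤ)) : ℚ_[p]) ≠ 0 :=
        LPne p 0 _ (fun i _ => by omega)
      have hDlim : Tendsto (fun e : ℕ =>
          (((((a:ℤ) * (p:ℤ)^e + c).toNat).choose (((b:ℤ) * (p:ℤ)^e + d).toNat) : ℕ) : ℚ_[p]))
          atTop (nhds (((L0 : ℚ_[p]) * (((∏ i ∈ range c.toNat, ((0:ℤ) + (i : ℤ) + 1) : ℤ) : ℚ_[p]) *
            ((∏ i ∈ range (-d).toNat, (d + (i : ℤ) + 1) : ℤ) : ℚ_[p]))) /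
            (((∏ i ∈ range (c - d).toNat, ((0:ℤ) + (i : ℤ) + 1) : ℤ)) : ℚ_[p]))) := by
        apply tendsto_of_eventually_mul (h := fun e => PFq p (a - b) 0 (c - d).toNat e)
        · filter_upwards [eventually_ge_atTop (c.natAbs + d.natAbs + 2)] with e he
          exact hkey e he
        · exact hL0Q.mul ((PFq_tendsto p a 0 c.toNat).mul (PFq_tendsto p b d (-d).toNat))
        · exact PFq_tendsto p (a - b) 0 (c - d).toNat
        · exact hHne
        · filter_upwards [eventually_ge_atTop (c.natAbs + d.natAbs + 2)] with e he
          obtain ⟨h1, h2, h3, h4, h5, h6, h7⟩ := hbase e he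
          exact PFq_ne p (a - b) 0 (c - d).toNat e (fun i _ => by omega)
      obtain ⟨L, hLcoe, hLtend⟩ := exists_coe_lim p
        (fun e => ((((a:ℤ) * (p:ℤ)^e + c).toNat).choose (((b:ℤ) * (p:ℤ)^e + d).toNat))) _ hDlim
      refine ⟨L, hL0, hLtend, ?_, ?_, ?_, ?_⟩
      · intro _ hd0
        exact absurd hd0 hd
      · intro hc0 _
        exact absurd hc0 (not_lt.mpr hc)
      · intro hc0 _
        exact absurd hc0 (not_lt.mpr hc)
      · intro _ _ _
        have hz : (∏ i ∈ range (-d).toNat, (d + (i : ℤ) + 1)) = 0 := by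
          apply prod_eq_zero (mem_range.mpr (show (-d).toNat - 1 < (-d).toNat by omega))
          omega
        apply Subtype.coe_injective
        push_cast
        rw [hLcoe, hz]
        push_cast
        ring
  · -- c < 0
    have hc' : c < 0 := lt_of_not_ge hc
    by_cases hd : 0 ≤ d
    · -- case FTF : c < 0 ≤ d
      have hkey : ∀ e : ℕ, c.natAbs + d.natAbs + 2 ≤ e →
          (((((a:ℤ) * (p:ℤ)^e + c).toNat).choose (((b:ℤ) * (p:ℤ)^e + d).toNat) : ℕ) : ℚ_[p]) *
            (PFq p b 0 d.toNat e * PFq p a c ((-c - 1).toNat) e * (a : ℚ_[p])) =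
          (((a * p ^ e).choose (b * p ^ e) : ℕ) : ℚ_[p]) *
            (PFq p (a - b) (c - d) ((d - c - 1).toNat) e * ((a - b : ℕ) : ℚ_[p])) := by
        intro e he
        obtain ⟨h1, h2, h3, h4, h5, h6, h7⟩ := hbase e he
        have hMM : ((b:ℤ) * (p:ℤ)^e + d).toNat = b * p ^ e + d.toNat := by omega
        have hMN : b * p ^ e + d.toNat ≤ ((a:ℤ) * (p:ℤ)^e + c).toNat := by omega
        have hD := Nat.choose_mul_factorial_mul_factorial hMN
        have hC := Nat.choose_mul_factorial_mul_factorial (Nat.mul_le_mul_right (p^e) hblea)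
        have hD' := congrArg (fun t : ℕ => (t : ℚ_[p])) hD
        have hC' := congrArg (fun t : ℕ => (t : ℚ_[p])) hC
        simp only [Nat.cast_mul] at hD' hC'
        rw [PFq_fact p b 0 (b * p^e) d.toNat e (by push_cast; ring)] at hD'
        have hN0f : (((a * p^e).factorial : ℕ) : ℚ_[p]) =
            ((((a:ℤ) * (p:ℤ)^e + c).toNat.factorial : ℕ) : ℚ_[p]) * PFq p a c (-c).toNat e := by
          rw [show a * p^e = ((a:ℤ) * (p:ℤ)^e + c).toNat + (-c).toNat by omega]
          exact PFq_fact p a c _ (-c).toNat e (by omega)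
        have hK0f : ((((a - b) * p^e).factorial : ℕ) : ℚ_[p]) =
            (((((a:ℤ) * (p:ℤ)^e + c).toNat - (b * p ^ e + d.toNat)).factorial : ℕ) : ℚ_[p]) *
              PFq p (a - b) (c - d) (d - c).toNat e := by
          rw [show (a - b) * p^e =
              (((a:ℤ) * (p:ℤ)^e + c).toNat - (b * p ^ e + d.toNat)) + (d - c).toNat by omega]
          exact PFq_fact p (a - b) (c - d) _ (d - c).toNat e (by omega)
        rw [show a * p^e - b * p^e = (a - b) * p^e by omega, hN0f, hK0f] at hC'
        rw [show (-c).toNat = (-c - 1).toNat + 1 by omega,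
            PFq_peel p a c ((-c - 1).toNat) e (by omega)] at hC'
        rw [show (d - c).toNat = (d - c - 1).toNat + 1 by omega,
            PFq_peel p (a - b) (c - d) ((d - c - 1).toNat) e (by omega)] at hC'
        rw [hMM]
        have hfne : ((((b * p^e).factorial : ℕ) : ℚ_[p]) *
            (((((a:ℤ) * (p:ℤ)^e + c).toNat - (b * p ^ e + d.toNat)).factorial : ℕ) : ℚ_[p]) *
            ((p : ℚ_[p]))^e) ≠ 0 :=
          mul_ne_zero (mul_ne_zero (Nat.cast_ne_zero.mpr (Nat.factorial_ne_zero _))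
            (Nat.cast_ne_zero.mpr (Nat.factorial_ne_zero _)))
            (pow_ne_zero _ (Nat.cast_ne_zero.mpr hpp.pos.ne'))
        apply mul_right_cancel₀ hfne
        linear_combination (PFq p a c ((-c - 1).toNat) e * (a : ℚ_[p]) * ((p : ℚ_[p]))^e) * hD' - hC'
      have hHne : ((((∏ i ∈ range d.toNat, ((0:ℤ) + (i : ℤ) + 1) : ℤ)) : ℚ_[p]) *
          (((∏ i ∈ range ((-c - 1).toNat), (c + (i : ℤ) + 1) : ℤ)) : ℚ_[p]) * (a : ℚ_[p])) ≠ 0 :=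
        mul_ne_zero (mul_ne_zero (LPne p 0 _ (fun i _ => by omega))
          (LPne p c _ (fun i hi => by omega))) (Nat.cast_ne_zero.mpr (by omega))
      have hDlim : Tendsto (fun e : ℕ =>
          (((((a:ℤ) * (p:ℤ)^e + c).toNat).choose (((b:ℤ) * (p:ℤ)^e + d).toNat) : ℕ) : ℚ_[p]))
          atTop (nhds (((L0 : ℚ_[p]) *
            (((∏ i ∈ range ((d - c - 1).toNat), ((c - d) + (i : ℤ) + 1) : ℤ) : ℚ_[p]) *
              ((a - b : ℕ) : ℚ_[p]))) /
            ((((∏ i ∈ range d.toNat, ((0:ℤ) + (i : ℤ) + 1) : ℤ)) : ℚ_[p]) *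
             (((∏ i ∈ range ((-c - 1).toNat), (c + (i : ℤ) + 1) : ℤ)) : ℚ_[p]) * (a : ℚ_[p])))) := by
        apply tendsto_of_eventually_mul
          (h := fun e => PFq p b 0 d.toNat e * PFq p a c ((-c - 1).toNat) e * (a : ℚ_[p]))
        · filter_upwards [eventually_ge_atTop (c.natAbs + d.natAbs + 2)] with e he
          exact hkey e he
        · exact hL0Q.mul ((PFq_tendsto p (a - b) (c - d) ((d - c - 1).toNat)).mul
            tendsto_const_nhds)
        · exact ((PFq_tendsto p b 0 d.toNat).mul (PFq_tendsto p a c ((-c - 1).toNat))).mul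
            tendsto_const_nhds
        · exact hHne
        · filter_upwards [eventually_ge_atTop (c.natAbs + d.natAbs + 2)] with e he
          obtain ⟨h1, h2, h3, h4, h5, h6, h7⟩ := hbase e he
          exact mul_ne_zero (mul_ne_zero (PFq_ne p b 0 d.toNat e (fun i _ => by omega))
            (PFq_ne p a c ((-c - 1).toNat) e (fun i hi => by omega)))
            (Nat.cast_ne_zero.mpr (by omega))
      obtain ⟨L, hLcoe, hLtend⟩ := exists_coe_lim p
        (fun e => ((((a:ℤ) * (p:ℤ)^e + c).toNat).choose (((b:ℤ) * (p:ℤ)^e + d).toNat))) _ hDlim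
      refine ⟨L, hL0, hLtend, ?_, ?_, ?_, ?_⟩
      · intro hc0 _
        exact absurd hc0 hc
      · intro _ _
        have hint : (∏ i ∈ range ((d - c - 1).toNat), ((c - d) + (i : ℤ) + 1)) =
            genChoose c d.toNat * ((∏ i ∈ range d.toNat, ((0:ℤ) + (i : ℤ) + 1)) *
              (∏ i ∈ range ((-c - 1).toNat), (c + (i : ℤ) + 1))) := by
          have e2 : ∏ i ∈ range ((d - c - 1).toNat), ((c - d) + (i : ℤ) + 1) =
              ∏ i ∈ range ((d - c - 1).toNat), (c - d + 1 + (i : ℤ)) := by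
            apply prod_congr rfl; intro i _; ring
          have e3 : ∏ i ∈ range ((-c - 1).toNat), (c + (i : ℤ) + 1) =
              ∏ i ∈ range ((-c - 1).toNat), (c + 1 + (i : ℤ)) := by
            apply prod_congr rfl; intro i _; ring
          have e1 : ∏ i ∈ range d.toNat, ((0:ℤ) + (i : ℤ) + 1) =
              ∏ i ∈ range d.toNat, ((i : ℤ) + 1) := by
            apply prod_congr rfl; intro i _; ring
          rw [e2, e3, e1, IZ' c d hc' hd, intProd_eq' d.toNat]
          have hg := genChoose_mul_factorial c d.toNat
          linear_combination (∏ i ∈ range ((-c - 1).toNat), (c + 1 + (i:ℤ))) * hg.symm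
        have hcast : ((∏ i ∈ range ((d - c - 1).toNat), ((c - d) + (i : ℤ) + 1) : ℤ) : ℚ_[p]) =
            ((genChoose c d.toNat : ℤ) : ℚ_[p]) *
              ((((∏ i ∈ range d.toNat, ((0:ℤ) + (i : ℤ) + 1) : ℤ)) : ℚ_[p]) *
               (((∏ i ∈ range ((-c - 1).toNat), (c + (i : ℤ) + 1) : ℤ)) : ℚ_[p])) := by
          exact_mod_cast hint
        have hABeq : ((a - b : ℕ) : ℚ_[p]) = (a : ℚ_[p]) - (b : ℚ_[p]) := by
          rw [Nat.cast_sub hblea]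
        apply Subtype.coe_injective
        push_cast
        rw [hLcoe, mul_div_assoc', div_eq_iff hHne, ← hABeq]
        linear_combination ((a : ℚ_[p]) * (L0 : ℚ_[p]) * ((a - b : ℕ) : ℚ_[p])) * hcast
      · intro _ hcd0
        exact absurd hcd0 (by omega)
      · intro _ h2' _
        exact absurd ⟨hc', hd⟩ h2'
    · -- d < 0
      have hd' : d < 0 := lt_of_not_ge hd
      by_cases hcd : 0 ≤ c - d
      · -- case FFT : c < 0, d < 0, c - d ≥ 0
        have hkey : ∀ e : ℕ, c.natAbs + d.natAbs + 2 ≤ e →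
            (((((a:ℤ) * (p:ℤ)^e + c).toNat).choose (((b:ℤ) * (p:ℤ)^e + d).toNat) : ℕ) : ℚ_[p]) *
              (PFq p (a - b) 0 (c - d).toNat e * PFq p a c ((-c - 1).toNat) e * (a : ℚ_[p])) =
            (((a * p ^ e).choose (b * p ^ e) : ℕ) : ℚ_[p]) *
              (PFq p b d ((-d - 1).toNat) e * (b : ℚ_[p])) := by
          intro e he
          obtain ⟨h1, h2, h3, h4, h5, h6, h7⟩ := hbase e he
          have hMN : ((b:ℤ) * (p:ℤ)^e + d).toNat ≤ ((a:ℤ) * (p:ℤ)^e + c).toNat := by omega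
          have hD := Nat.choose_mul_factorial_mul_factorial hMN
          rw [show ((a:ℤ) * (p:ℤ)^e + c).toNat - ((b:ℤ) * (p:ℤ)^e + d).toNat =
              (a - b) * p ^ e + (c - d).toNat by omega] at hD
          have hC := Nat.choose_mul_factorial_mul_factorial (Nat.mul_le_mul_right (p^e) hblea)
          rw [show a * p^e - b * p^e = (a - b) * p^e by omega] at hC
          have hD' := congrArg (fun t : ℕ => (t : ℚ_[p])) hD
          have hC' := congrArg (fun t : ℕ => (t : ℚ_[p])) hC
          simp only [Nat.cast_mul] at hD' hC'
          rw [PFq_fact p (a - b) 0 ((a - b) * p^e) (c - d).toNat e (by rw [h7]; ring)] at hD'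
          have hN0f : (((a * p^e).factorial : ℕ) : ℚ_[p]) =
              ((((a:ℤ) * (p:ℤ)^e + c).toNat.factorial : ℕ) : ℚ_[p]) * PFq p a c (-c).toNat e := by
            rw [show a * p^e = ((a:ℤ) * (p:ℤ)^e + c).toNat + (-c).toNat by omega]
            exact PFq_fact p a c _ (-c).toNat e (by omega)
          have hM0f : (((b * p^e).factorial : ℕ) : ℚ_[p]) =
              ((((b:ℤ) * (p:ℤ)^e + d).toNat.factorial : ℕ) : ℚ_[p]) * PFq p b d (-d).toNat e := by
            rw [show b * p^e = ((b:ℤ) * (p:ℤ)^e + d).toNat + (-d).toNat by omega]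
            exact PFq_fact p b d _ (-d).toNat e (by omega)
          rw [hN0f, hM0f] at hC'
          rw [show (-c).toNat = (-c - 1).toNat + 1 by omega,
              PFq_peel p a c ((-c - 1).toNat) e (by omega)] at hC'
          rw [show (-d).toNat = (-d - 1).toNat + 1 by omega,
              PFq_peel p b d ((-d - 1).toNat) e (by omega)] at hC'
          have hfne : (((((b:ℤ) * (p:ℤ)^e + d).toNat.factorial : ℕ) : ℚ_[p]) *
              ((((a - b) * p^e).factorial : ℕ) : ℚ_[p]) * ((p : ℚ_[p]))^e) ≠ 0 :=
            mul_ne_zero (mul_ne_zero (Nat.cast_ne_zero.mpr (Nat.factorial_ne_zero _))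
              (Nat.cast_ne_zero.mpr (Nat.factorial_ne_zero _)))
              (pow_ne_zero _ (Nat.cast_ne_zero.mpr hpp.pos.ne'))
          apply mul_right_cancel₀ hfne
          linear_combination (PFq p a c ((-c - 1).toNat) e * (a : ℚ_[p]) * ((p : ℚ_[p]))^e) * hD' - hC'
        have hHne : ((((∏ i ∈ range (c - d).toNat, ((0:ℤ) + (i : ℤ) + 1) : ℤ)) : ℚ_[p]) *
            (((∏ i ∈ range ((-c - 1).toNat), (c + (i : ℤ) + 1) : ℤ)) : ℚ_[p]) * (a : ℚ_[p])) ≠ 0 :=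
          mul_ne_zero (mul_ne_zero (LPne p 0 _ (fun i _ => by omega))
            (LPne p c _ (fun i hi => by omega))) (Nat.cast_ne_zero.mpr (by omega))
        have hDlim : Tendsto (fun e : ℕ =>
            (((((a:ℤ) * (p:ℤ)^e + c).toNat).choose (((b:ℤ) * (p:ℤ)^e + d).toNat) : ℕ) : ℚ_[p]))
            atTop (nhds (((L0 : ℚ_[p]) *
              (((∏ i ∈ range ((-d - 1).toNat), (d + (i : ℤ) + 1) : ℤ) : ℚ_[p]) * (b : ℚ_[p]))) /
              ((((∏ i ∈ range (c - d).toNat, ((0:ℤ) + (i : ℤ) + 1) : ℤ)) : ℚ_[p]) *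
               (((∏ i ∈ range ((-c - 1).toNat), (c + (i : ℤ) + 1) : ℤ)) : ℚ_[p]) * (a : ℚ_[p])))) := by
          apply tendsto_of_eventually_mul
            (h := fun e => PFq p (a - b) 0 (c - d).toNat e * PFq p a c ((-c - 1).toNat) e * (a : ℚ_[p]))
          · filter_upwards [eventually_ge_atTop (c.natAbs + d.natAbs + 2)] with e he
            exact hkey e he
          · exact hL0Q.mul ((PFq_tendsto p b d ((-d - 1).toNat)).mul tendsto_const_nhds)
          · exact ((PFq_tendsto p (a - b) 0 (c - d).toNat).mul
              (PFq_tendsto p a c ((-c - 1).toNat))).mul tendsto_const_nhds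
          · exact hHne
          · filter_upwards [eventually_ge_atTop (c.natAbs + d.natAbs + 2)] with e he
            obtain ⟨h1, h2, h3, h4, h5, h6, h7⟩ := hbase e he
            exact mul_ne_zero (mul_ne_zero
              (PFq_ne p (a - b) 0 (c - d).toNat e (fun i _ => by omega))
              (PFq_ne p a c ((-c - 1).toNat) e (fun i hi => by omega)))
              (Nat.cast_ne_zero.mpr (by omega))
        obtain ⟨L, hLcoe, hLtend⟩ := exists_coe_lim p
          (fun e => ((((a:ℤ) * (p:ℤ)^e + c).toNat).choose (((b:ℤ) * (p:ℤ)^e + d).toNat))) _ hDlim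
        refine ⟨L, hL0, hLtend, ?_, ?_, ?_, ?_⟩
        · intro hc0 _
          exact absurd hc0 hc
        · intro _ hd0
          exact absurd hd0 hd
        · intro _ _
          have hint : (∏ i ∈ range ((-d - 1).toNat), (d + (i : ℤ) + 1)) =
              genChoose c (c - d).toNat * ((∏ i ∈ range (c - d).toNat, ((0:ℤ) + (i : ℤ) + 1)) *
                (∏ i ∈ range ((-c - 1).toNat), (c + (i : ℤ) + 1))) := by
            have e2 : ∏ i ∈ range ((-d - 1).toNat), (d + (i : ℤ) + 1) =
                ∏ i ∈ range (((c - d) - c - 1).toNat), (c - (c - d) + 1 + (i : ℤ)) := by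
              rw [show ((c - d) - c - 1).toNat = (-d - 1).toNat by omega]
              apply prod_congr rfl; intro i _; ring
            have e3 : ∏ i ∈ range ((-c - 1).toNat), (c + (i : ℤ) + 1) =
                ∏ i ∈ range ((-c - 1).toNat), (c + 1 + (i : ℤ)) := by
              apply prod_congr rfl; intro i _; ring
            have e1 : ∏ i ∈ range (c - d).toNat, ((0:ℤ) + (i : ℤ) + 1) =
                ∏ i ∈ range (c - d).toNat, ((i : ℤ) + 1) := by
              apply prod_congr rfl; intro i _; ring
            rw [e2, e3, e1, IZ' c (c - d) hc' hcd, intProd_eq' (c - d).toNat]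
            have hg := genChoose_mul_factorial c (c - d).toNat
            linear_combination (∏ i ∈ range ((-c - 1).toNat), (c + 1 + (i:ℤ))) * hg.symm
          have hcast : ((∏ i ∈ range ((-d - 1).toNat), (d + (i : ℤ) + 1) : ℤ) : ℚ_[p]) =
              ((genChoose c (c - d).toNat : ℤ) : ℚ_[p]) *
                ((((∏ i ∈ range (c - d).toNat, ((0:ℤ) + (i : ℤ) + 1) : ℤ)) : ℚ_[p]) *
                 (((∏ i ∈ range ((-c - 1).toNat), (c + (i : ℤ) + 1) : ℤ)) : ℚ_[p])) := by
            exact_mod_cast hint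
          apply Subtype.coe_injective
          push_cast
          rw [hLcoe, mul_div_assoc', div_eq_iff hHne]
          linear_combination ((a : ℚ_[p]) * (L0 : ℚ_[p]) * (b : ℚ_[p])) * hcast
        · intro _ _ h3'
          exact absurd ⟨hc', hcd⟩ h3'
      · -- case FFF : c < 0, d < 0, c - d < 0
        have hu0 : Tendsto (fun e : ℕ => (p : ℚ_[p]) ^ e) atTop (nhds 0) := by
          apply tendsto_pow_atTop_nhds_zero_of_norm_lt_one
          rw [Padic.norm_p, inv_lt_one_iff₀]
          right
          exact_mod_cast hpp.one_lt
        have hkey : ∀ e : ℕ, c.natAbs + d.natAbs + 2 ≤ e →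
            (((((a:ℤ) * (p:ℤ)^e + c).toNat).choose (((b:ℤ) * (p:ℤ)^e + d).toNat) : ℕ) : ℚ_[p]) *
              (PFq p a c ((-c - 1).toNat) e * (a : ℚ_[p])) =
            (((a * p ^ e).choose (b * p ^ e) : ℕ) : ℚ_[p]) *
              ((((PFq p b d ((-d - 1).toNat) e * (b : ℚ_[p])) *
                PFq p (a - b) (c - d) ((d - c - 1).toNat) e) * ((a - b : ℕ) : ℚ_[p])) *
                ((p : ℚ_[p]))^e) := by
          intro e he
          obtain ⟨h1, h2, h3, h4, h5, h6, h7⟩ := hbase e he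
          have hMN : ((b:ℤ) * (p:ℤ)^e + d).toNat ≤ ((a:ℤ) * (p:ℤ)^e + c).toNat := by omega
          have hD := Nat.choose_mul_factorial_mul_factorial hMN
          have hC := Nat.choose_mul_factorial_mul_factorial (Nat.mul_le_mul_right (p^e) hblea)
          have hD' := congrArg (fun t : ℕ => (t : ℚ_[p])) hD
          have hC' := congrArg (fun t : ℕ => (t : ℚ_[p])) hC
          simp only [Nat.cast_mul] at hD' hC'
          have hN0f : (((a * p^e).factorial : ℕ) : ℚ_[p]) =
              ((((a:ℤ) * (p:ℤ)^e + c).toNat.factorial : ℕ) : ℚ_[p]) * PFq p a c (-c).toNat e := by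
            rw [show a * p^e = ((a:ℤ) * (p:ℤ)^e + c).toNat + (-c).toNat by omega]
            exact PFq_fact p a c _ (-c).toNat e (by omega)
          have hM0f : (((b * p^e).factorial : ℕ) : ℚ_[p]) =
              ((((b:ℤ) * (p:ℤ)^e + d).toNat.factorial : ℕ) : ℚ_[p]) * PFq p b d (-d).toNat e := by
            rw [show b * p^e = ((b:ℤ) * (p:ℤ)^e + d).toNat + (-d).toNat by omega]
            exact PFq_fact p b d _ (-d).toNat e (by omega)
          have hK0f : ((((a - b) * p^e).factorial : ℕ) : ℚ_[p]) =
              (((((a:ℤ) * (p:ℤ)^e + c).toNat - ((b:ℤ) * (p:ℤ)^e + d).toNat).factorial : ℕ) : ℚ_[p]) *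
                PFq p (a - b) (c - d) (d - c).toNat e := by
            rw [show (a - b) * p^e =
                (((a:ℤ) * (p:ℤ)^e + c).toNat - ((b:ℤ) * (p:ℤ)^e + d).toNat) + (d - c).toNat by omega]
            exact PFq_fact p (a - b) (c - d) _ (d - c).toNat e (by omega)
          rw [show a * p^e - b * p^e = (a - b) * p^e by omega, hN0f, hM0f, hK0f] at hC'
          rw [show (-c).toNat = (-c - 1).toNat + 1 by omega,
              PFq_peel p a c ((-c - 1).toNat) e (by omega)] at hC'
          rw [show (-d).toNat = (-d - 1).toNat + 1 by omega,
              PFq_peel p b d ((-d - 1).toNat) e (by omega)] at hC'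
          rw [show (d - c).toNat = (d - c - 1).toNat + 1 by omega,
              PFq_peel p (a - b) (c - d) ((d - c - 1).toNat) e (by omega)] at hC'
          have hfne : (((((b:ℤ) * (p:ℤ)^e + d).toNat.factorial : ℕ) : ℚ_[p]) *
              ((((((a:ℤ) * (p:ℤ)^e + c).toNat - ((b:ℤ) * (p:ℤ)^e + d).toNat).factorial : ℕ)) : ℚ_[p]) *
              ((p : ℚ_[p]))^e) ≠ 0 :=
            mul_ne_zero (mul_ne_zero (Nat.cast_ne_zero.mpr (Nat.factorial_ne_zero _))
              (Nat.cast_ne_zero.mpr (Nat.factorial_ne_zero _)))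
              (pow_ne_zero _ (Nat.cast_ne_zero.mpr hpp.pos.ne'))
          apply mul_right_cancel₀ hfne
          linear_combination (PFq p a c ((-c - 1).toNat) e * (a : ℚ_[p]) * ((p : ℚ_[p]))^e) * hD' - hC'
        have hHne : ((((∏ i ∈ range ((-c - 1).toNat), (c + (i : ℤ) + 1) : ℤ)) : ℚ_[p]) *
            (a : ℚ_[p])) ≠ 0 :=
          mul_ne_zero (LPne p c _ (fun i hi => by omega)) (Nat.cast_ne_zero.mpr (by omega))
        have hDlim : Tendsto (fun e : ℕ =>
            (((((a:ℤ) * (p:ℤ)^e + c).toNat).choose (((b:ℤ) * (p:ℤ)^e + d).toNat) : ℕ) : ℚ_[p]))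
            atTop (nhds (((L0 : ℚ_[p]) *
              ((((((∏ i ∈ range ((-d - 1).toNat), (d + (i : ℤ) + 1) : ℤ) : ℚ_[p]) * (b : ℚ_[p])) *
                ((∏ i ∈ range ((d - c - 1).toNat), ((c - d) + (i : ℤ) + 1) : ℤ) : ℚ_[p])) *
                ((a - b : ℕ) : ℚ_[p])) * (0 : ℚ_[p]))) /
              ((((∏ i ∈ range ((-c - 1).toNat), (c + (i : ℤ) + 1) : ℤ)) : ℚ_[p]) * (a : ℚ_[p])))) := by
          apply tendsto_of_eventually_mul
            (h := fun e => PFq p a c ((-c - 1).toNat) e * (a : ℚ_[p]))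
          · filter_upwards [eventually_ge_atTop (c.natAbs + d.natAbs + 2)] with e he
            exact hkey e he
          · exact hL0Q.mul (((((PFq_tendsto p b d ((-d - 1).toNat)).mul
              tendsto_const_nhds).mul (PFq_tendsto p (a - b) (c - d) ((d - c - 1).toNat))).mul
              tendsto_const_nhds).mul hu0)
          · exact (PFq_tendsto p a c ((-c - 1).toNat)).mul tendsto_const_nhds
          · exact hHne
          · filter_upwards [eventually_ge_atTop (c.natAbs + d.natAbs + 2)] with e he
            obtain ⟨h1, h2, h3, h4, h5, h6, h7⟩ := hbase e he
            exact mul_ne_zero (PFq_ne p a c ((-c - 1).toNat) e (fun i hi => by omega))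
              (Nat.cast_ne_zero.mpr (by omega))
        obtain ⟨L, hLcoe, hLtend⟩ := exists_coe_lim p
          (fun e => ((((a:ℤ) * (p:ℤ)^e + c).toNat).choose (((b:ℤ) * (p:ℤ)^e + d).toNat))) _ hDlim
        refine ⟨L, hL0, hLtend, ?_, ?_, ?_, ?_⟩
        · intro hc0 _
          exact absurd hc0 hc
        · intro _ hd0
          exact absurd hd0 hd
        · intro _ hcd0
          exact absurd hcd0 hcd
        · intro _ _ _
          apply Subtype.coe_injective
          push_cast
          rw [hLcoe]
          ring
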